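/- There exist constants C > 0, c > 0 and ν₀ ≥ 1 such that for every real ν ≥ ν₀ and every r with 0 < r ≤ ν/2, one has |J_ν(r)| ≤ C e^{-c(ν + r)}. -/

import Mathlib

open MeasureTheory Real

/-- The Bessel function of order `ν > -1/2`:
`J_ν(r) = ((r/2)^ν / (Γ(ν+1/2) Γ(1/2))) ∫_{-1}^1 e^{isr} (1-s²)^{ν-1/2} ds`. -/
noncomputable def besselJ (ν r : ℝ) : ℂ :=
  (((r / 2) ^ ν / (Real.Gamma (ν + 1 / 2) * Real.Gamma (1 / 2)) : ℝ) : ℂ) *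
    ∫ s in (-1 : ℝ)..1,
      Complex.exp (Complex.I * (s : ℂ) * (r : ℂ)) * (((1 - s ^ 2) ^ (ν - 1 / 2) : ℝ) : ℂ)

/-- Exponential decay of the Bessel function below the turning point (Lemma 2.1, (2.11)):
for `ν` large and `0 < r ≤ ν/2`, `|J_ν(r)| ≤ C e^{-c(ν+r)}`. -/
theorem besselJ_exponential_decay :
    ∃ C c ν₀ : ℝ, 0 < C ∧ 0 < c ∧ 1 ≤ ν₀ ∧
      ∀ ν r : ℝ, ν₀ ≤ ν → 0 < r → r ≤ ν / 2 →
        ‖besselJ ν r‖ ≤ C * Real.exp (-c * (ν + r)) := by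
  refine ⟨800, 9/50, 3, by norm_num, by norm_num, by norm_num, ?_⟩
  intro ν r hν hr hr2
  have hν0 : (0:ℝ) < ν := by linarith
  set n : ℕ := ⌊ν⌋₊ with hn
  have hn3 : 3 ≤ n := Nat.le_floor (by exact_mod_cast hν)
  have hnν : (n:ℝ) ≤ ν := Nat.floor_le hν0.le
  have hνn : ν < n + 1 := Nat.lt_floor_add_one ν
  have hG1 : (0:ℝ) < Real.Gamma (ν + 1/2) := Real.Gamma_pos_of_pos (by linarith)
  have hG2 : (1:ℝ) ≤ Real.Gamma (1/2) := by
    rw [Real.Gamma_one_half_eq]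
    rw [show (1:ℝ) = Real.sqrt 1 from (Real.sqrt_one).symm]
    exact Real.sqrt_le_sqrt (by linarith [Real.pi_gt_three])
  -- bound on the integral
  have hint : ‖∫ s in (-1:ℝ)..1,
      Complex.exp (Complex.I * (s:ℂ) * (r:ℂ)) * (((1 - s^2) ^ (ν - 1/2) : ℝ) : ℂ)‖ ≤ 2 := by
    have h := intervalIntegral.norm_integral_le_of_norm_le_const (a := (-1:ℝ)) (b := 1) (C := 1)
      (f := fun s => Complex.exp (Complex.I * (s:ℂ) * (r:ℂ)) * (((1 - s^2) ^ (ν - 1/2) : ℝ) : ℂ))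
      ?_
    · calc _ ≤ (1:ℝ) * |(1:ℝ) - (-1)| := h
        _ = 2 := by norm_num
    · intro s hs
      rw [Set.uIoc_of_le (by norm_num : (-1:ℝ) ≤ 1)] at hs
      have hs1 : s^2 ≤ 1 := by nlinarith [hs.1, hs.2]
      have h0 : (0:ℝ) ≤ 1 - s^2 := by linarith
      rw [norm_mul]
      have he : ‖Complex.exp (Complex.I * (s:ℂ) * (r:ℂ))‖ = 1 := by
        rw [Complex.norm_exp]
        simp [mul_comm]
      rw [he, one_mul, Complex.norm_real, Real.norm_eq_abs,
        abs_of_nonneg (Real.rpow_nonneg h0 _)]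
      exact Real.rpow_le_one h0 (by nlinarith) (by linarith)
  have hK : (0:ℝ) ≤ (r/2)^ν / (Real.Gamma (ν+1/2) * Real.Gamma (1/2)) := by positivity
  have h1 : ‖besselJ ν r‖ ≤ ((r/2)^ν / (Real.Gamma (ν+1/2) * Real.Gamma (1/2))) * 2 := by
    rw [besselJ, norm_mul, Complex.norm_real, Real.norm_eq_abs, abs_of_nonneg hK]
    exact mul_le_mul_of_nonneg_left hint hK
  have h2 : (r/2)^ν / (Real.Gamma (ν+1/2) * Real.Gamma (1/2)) ≤ (ν/4)^ν / Real.Gamma (ν+1/2) := by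
    apply div_le_div₀ (by positivity)
      (Real.rpow_le_rpow (by positivity) (by linarith) hν0.le) hG1
      (le_mul_of_one_le_right hG1.le hG2)
  -- factorial lower bound for Gamma
  have hfp : (0:ℝ) < ((n-1).factorial : ℝ) := by exact_mod_cast Nat.factorial_pos (n-1)
  have hcast : ((n-1 : ℕ) : ℝ) = (n:ℝ) - 1 := by
    have : 1 ≤ n := by omega
    push_cast [this]
    ring
  have hfac : ((n-1).factorial : ℝ) ≤ Real.Gamma (ν + 1/2) := by
    have hmem1 : (n:ℝ) ∈ Set.Ici (2:ℝ) := by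
      simp only [Set.mem_Ici]
      exact_mod_cast (by omega : 2 ≤ n)
    have hmem2 : ν + 1/2 ∈ Set.Ici (2:ℝ) := by
      simp only [Set.mem_Ici]; linarith
    have hle : (n:ℝ) ≤ ν + 1/2 := by linarith
    have := Real.Gamma_strictMonoOn_Ici.monotoneOn hmem1 hmem2 hle
    have hg : Real.Gamma (n:ℝ) = ((n-1).factorial : ℝ) := by
      rw [show (n:ℝ) = ((n-1:ℕ):ℝ) + 1 by rw [hcast]; ring, Real.Gamma_nat_eq_factorial]
    linarith
  have h5 : ν ^ (n-1) * Real.exp (-ν) ≤ ((n-1).factorial : ℝ) := by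
    have h := Real.pow_div_factorial_le_exp (x := ν) hν0.le (n-1)
    rw [div_le_iff₀ hfp] at h
    calc ν^(n-1) * Real.exp (-ν) ≤ (Real.exp ν * ((n-1).factorial : ℝ)) * Real.exp (-ν) :=
          mul_le_mul_of_nonneg_right h (Real.exp_pos _).le
      _ = ((n-1).factorial : ℝ) := by
          rw [mul_comm (Real.exp ν), mul_assoc, ← Real.exp_add]; simp
  have hpowpos : (0:ℝ) < ν ^ (n-1) * Real.exp (-ν) := by positivity
  have h6 : (ν/4)^ν / Real.Gamma (ν + 1/2) ≤ (ν/4)^ν / (ν ^ (n-1) * Real.exp (-ν)) :=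
    div_le_div_of_nonneg_left (by positivity) hpowpos (le_trans h5 hfac)
  -- rewrite the middle quantity
  have hsplit : ν ^ ν = ν ^ (ν - ((n:ℝ) - 1)) * ν ^ (n-1) := by
    rw [← Real.rpow_natCast ν (n-1), hcast, ← Real.rpow_add hν0]
    ring_nf
  have hkey : (ν/4)^ν / (ν ^ (n-1) * Real.exp (-ν)) =
      ν ^ (ν - ((n:ℝ) - 1)) / (4:ℝ)^ν * Real.exp ν := by
    rw [Real.div_rpow hν0.le (by norm_num : (0:ℝ) ≤ 4), hsplit, Real.exp_neg]
    have hb : ν ^ (n-1) ≠ 0 := by positivity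
    have hc : (4:ℝ)^ν ≠ 0 := by positivity
    have hd : Real.exp ν ≠ 0 := Real.exp_ne_zero ν
    field_simp
  have h7 : ν ^ (ν - ((n:ℝ) - 1)) ≤ ν ^ (2:ℝ) :=
    Real.rpow_le_rpow_of_exponent_le (by linarith) (by linarith)
  have hsq : ν ^ (2:ℝ) ≤ 400 * Real.exp (ν/10) := by
    rw [Real.rpow_two]
    have hb := Real.add_one_le_exp (ν/20)
    have hee : Real.exp (ν/20) * Real.exp (ν/20) = Real.exp (ν/10) := by
      rw [← Real.exp_add]; ring_nf
    nlinarith [Real.exp_pos (ν/20)]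
  have h4ν : (4:ℝ)^ν = Real.exp (2 * Real.log 2 * ν) := by
    rw [Real.rpow_def_of_pos (by norm_num : (0:ℝ) < 4)]
    congr 1
    rw [show (4:ℝ) = 2^2 by norm_num, Real.log_pow]
    push_cast; ring
  have h8 : ν ^ (ν - ((n:ℝ) - 1)) / (4:ℝ)^ν * Real.exp ν ≤
      400 * Real.exp (-(9/50) * (ν + r)) := by
    rw [h4ν]
    have h4pos : (0:ℝ) < Real.exp (2 * Real.log 2 * ν) := Real.exp_pos _
    calc ν ^ (ν - ((n:ℝ) - 1)) / Real.exp (2 * Real.log 2 * ν) * Real.exp ν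
        ≤ (400 * Real.exp (ν/10)) / Real.exp (2 * Real.log 2 * ν) * Real.exp ν := by
          gcongr
          exact h7.trans hsq
      _ = 400 * Real.exp (ν/10 - 2 * Real.log 2 * ν + ν) := by
          rw [Real.exp_add, Real.exp_sub]
          field_simp
      _ ≤ 400 * Real.exp (-(9/50) * (ν + r)) := by
          gcongr 400 * Real.exp ?_
          nlinarith [Real.log_two_gt_d9]
  calc ‖besselJ ν r‖ ≤ ((r/2)^ν / (Real.Gamma (ν+1/2) * Real.Gamma (1/2))) * 2 := h1
    _ ≤ ((ν/4)^ν / (ν ^ (n-1) * Real.exp (-ν))) * 2 := by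
        apply mul_le_mul_of_nonneg_right (h2.trans h6) (by norm_num)
    _ = (ν ^ (ν - ((n:ℝ) - 1)) / (4:ℝ)^ν * Real.exp ν) * 2 := by rw [hkey]
    _ ≤ (400 * Real.exp (-(9/50) * (ν + r))) * 2 := by
        apply mul_le_mul_of_nonneg_right h8 (by norm_num)
    _ = 800 * Real.exp (-(9/50) * (ν + r)) := by ring
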